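/- Let F be a field of characteristic different from 2 and let K = F(√a) be a quadratic extension of F (so a is not a square in F). Then K can be embedded in a cyclic extension L/F of degree 4 if and only if a is a sum of two squares in F. -/

import Mathlib

open Polynomial IntermediateField Module

set_option maxHeartbeats 1000000

section helpers
variable {F K : Type} [Field F] [Field K] [Algebra F K]

lemma quad_decomp (x : K) (a : F) (hx : x ^ 2 = algebraMap F K a)
    (hgen : Algebra.adjoin F ({x} : Set K) = ⊤) (t : K) :
    ∃ p q : F, t = algebraMap F K p + algebraMap F K q * x := by
  have hmem : t ∈ Algebra.adjoin F ({x} : Set K) := hgen ▸ Algebra.mem_top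
  induction hmem using Algebra.adjoin_induction with
  | mem z hz =>
    rcases hz with rfl
    exact ⟨0, 1, by simp⟩
  | algebraMap c => exact ⟨c, 0, by simp⟩
  | add z w _ _ hz hw =>
    obtain ⟨p, q, rfl⟩ := hz; obtain ⟨p', q', rfl⟩ := hw
    exact ⟨p + p', q + q', by push_cast [map_add]; ring⟩
  | mul z w _ _ hz hw =>
    obtain ⟨p, q, rfl⟩ := hz; obtain ⟨p', q', rfl⟩ := hw
    refine ⟨p * p' + q * q' * a, p * q' + p' * q, ?_⟩
    have : (algebraMap F K q) * (algebraMap F K q') * x ^ 2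
        = algebraMap F K q * algebraMap F K q' * algebraMap F K a := by rw [hx]
    push_cast [map_add, map_mul]
    linear_combination this

lemma quad_indep (a : F) (ha : ¬ IsSquare a) (x : K) (hx : x ^ 2 = algebraMap F K a)
    {p q : F} (h : algebraMap F K p + algebraMap F K q * x = 0) : p = 0 ∧ q = 0 := by
  have hinj := (algebraMap F K).injective
  by_cases hq : q = 0
  · subst hq
    simp only [map_zero, zero_mul, add_zero] at h
    exact ⟨hinj (by simpa using h), rfl⟩
  · exfalso
    apply ha
    have hx' : x = algebraMap F K (-(p / q)) := by
      have hqK : algebraMap F K q ≠ 0 := fun hc => hq (hinj (by simpa using hc))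
      rw [map_neg, map_div₀]
      field_simp
      linear_combination h
    refine ⟨p / q, hinj ?_⟩
    rw [← hx, hx']
    push_cast [map_mul]
    ring

lemma sum_sq_of_i (h2 : (2 : F) ≠ 0) (i : F) (hi : i ^ 2 = -1) (a : F) :
    ∃ u v : F, a = u ^ 2 + v ^ 2 := by
  refine ⟨(1 + a) / 2, i * (1 - a) / 2, ?_⟩
  field_simp
  linear_combination (-(a^2) + 2*a - 1) * hi

end helpers


lemma forward_dir {F K L : Type} [Field F] [Field K] [Algebra F K] [Field L] [Algebra F L]
    [Algebra K L] [IsScalarTower F K L]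
    (hchar : ringChar F ≠ 2) (a : F) (ha : ¬ IsSquare a)
    (x : K) (hx : x ^ 2 = algebraMap F K a)
    (hgen : Algebra.adjoin F ({x} : Set K) = ⊤)
    (hdeg : Module.finrank F K = 2)
    (hgal : IsGalois F L) (hL4 : Module.finrank F L = 4) (hcyc : IsCyclic (L ≃ₐ[F] L)) :
    ∃ u v : F, a = u ^ 2 + v ^ 2 := by
  classical
  have h2F : (2 : F) ≠ 0 := Ring.two_ne_zero hchar
  have hFLinj : Function.Injective (algebraMap F L) := (algebraMap F L).injective
  have ha0 : a ≠ 0 := fun h => ha ⟨0, by simp [h]⟩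
  have hfd : FiniteDimensional F L := FiniteDimensional.of_finrank_eq_succ (n := 3) hL4
  set y : L := algebraMap K L x with hy_def
  have hy2 : y ^ 2 = algebraMap F L a := by
    rw [← map_pow, hx, ← IsScalarTower.algebraMap_apply]
  have hy0 : y ≠ 0 := by
    intro h; apply ha0; apply hFLinj; rw [← hy2, h]; simp
  have h2L : (2 : L) ≠ 0 := by
    intro h; apply h2F; apply hFLinj; rw [map_ofNat, map_zero]; exact h
  have hcard : Nat.card (L ≃ₐ[F] L) = 4 := by
    rw [IsGalois.card_aut_eq_finrank, hL4]
  obtain ⟨σ, hσ⟩ := hcyc.exists_generator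
  have hord : orderOf σ = 4 := by rw [orderOf_eq_card_of_forall_mem_zpowers hσ, hcard]
  have hfix : ∀ z : L, σ z = z → ∃ c : F, algebraMap F L c = z := by
    intro z hz
    have hstab : Subgroup.zpowers σ ≤ MulAction.stabilizer (L ≃ₐ[F] L) z :=
      Subgroup.zpowers_le.mpr hz
    have hzbot : z ∈ (⊥ : IntermediateField F L) := by
      rw [← IsGalois.fixedField_fixingSubgroup (⊥ : IntermediateField F L)]
      exact fun g => hstab (hσ g.1)
    rwa [IntermediateField.mem_bot] at hzbot
  have hσy : σ y = -y := by
    have hσy2 : (σ y) ^ 2 = y ^ 2 := by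
      calc (σ y) ^ 2 = σ (y ^ 2) := (map_pow σ y 2).symm
        _ = algebraMap F L a := by rw [hy2, AlgEquiv.commutes]
        _ = y ^ 2 := hy2.symm
    rcases mul_eq_zero.mp (show (σ y - y) * (σ y + y) = 0 by linear_combination hσy2) with h | h
    · exfalso
      obtain ⟨c, hc⟩ := hfix y (sub_eq_zero.mp h)
      apply ha
      refine ⟨c, hFLinj ?_⟩
      rw [map_mul, hc, ← hy2]; ring
    · exact eq_neg_of_add_eq_zero_left h
  set f0 : K →ₐ[F] L := IsScalarTower.toAlgHom F K L with hf0
  set K'' : IntermediateField F L := f0.fieldRange with hK''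
  have hK2 : Module.finrank F K'' = 2 := by
    rw [← hdeg]
    exact (LinearEquiv.finrank_eq (AlgEquiv.toLinearEquiv (AlgEquiv.ofInjectiveField f0))).symm
  have hKL2 : Module.finrank K'' L = 2 := by
    have h := Module.finrank_mul_finrank F K'' L
    rw [hK2, hL4] at h; omega
  have hdecL : ∀ z : L, z ∈ K'' → ∃ p q : F, z = algebraMap F L p + algebraMap F L q * y := by
    intro z hz
    obtain ⟨t, ht⟩ := hz
    obtain ⟨p, q, rfl⟩ := quad_decomp x a hx hgen t
    refine ⟨p, q, ?_⟩
    have : f0 (algebraMap F K p + algebraMap F K q * x) = z := ht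
    rw [← this, map_add, map_mul]
    simp [hf0, IsScalarTower.toAlgHom_apply, ← IsScalarTower.algebraMap_apply, hy_def]
  have hσ2fix : ∀ z ∈ K'', σ (σ z) = z := by
    intro z hz
    obtain ⟨p, q, rfl⟩ := hdecL z hz
    simp [map_add, map_mul, hσy]
  have hne : K'' ≠ ⊤ := by
    intro h
    rw [h, IntermediateField.finrank_top'] at hK2
    omega
  obtain ⟨z, -, hzK⟩ := SetLike.exists_of_lt (lt_top_iff_ne_top.mpr hne)
  have hdep : ¬ LinearIndependent K'' ![(1 : L), z, z ^ 2] := by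
    intro h
    have := h.fintype_card_le_finrank
    rw [hKL2] at this
    simp at this
  obtain ⟨g, hgsum, j, hgj⟩ := Fintype.not_linearIndependent_iff.mp hdep
  set c0 := g 0 with hc0d; set c1 := g 1 with hc1d; set c2 := g 2 with hc2d
  have hsum : (c0 : L) + (c1 : L) * z + (c2 : L) * z ^ 2 = 0 := by
    have h := hgsum
    simp only [Fin.sum_univ_three, Matrix.cons_val_zero, Matrix.cons_val_one, Matrix.head_cons,
      Matrix.cons_val_two, Matrix.tail_cons, Algebra.smul_def, IntermediateField.algebraMap_apply,
      mul_one] at h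
    rw [← hc0d, ← hc1d, ← hc2d] at h
    exact h
  have hc2 : c2 ≠ 0 := by
    intro h20
    have h01 : (c0 : L) + (c1 : L) * z = 0 := by
      rw [h20] at hsum; simpa using hsum
    have hc1 : c1 = 0 := by
      by_contra h10
      apply hzK
      have hc1L : (c1 : L) ≠ 0 := fun hc => h10 (by exact_mod_cast hc)
      have hz' : z = (-(c0 : L)) * ((c1 : L))⁻¹ := by
        field_simp
        linear_combination h01
      rw [hz']
      exact mul_mem (neg_mem (SetLike.coe_mem c0)) (inv_mem (SetLike.coe_mem c1))
    have hc0 : c0 = 0 := by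
      have : (c0 : L) = 0 := by
        rw [hc1] at h01; simpa using h01
      exact_mod_cast this
    fin_cases j
    · exact hgj hc0
    · exact hgj hc1
    · exact hgj h20
  have hc2L : (c2 : L) ≠ 0 := fun hc => hc2 (by exact_mod_cast hc)
  have h2m : (2 : L) ∈ K'' := by rw [← map_ofNat (algebraMap F L) 2]; exact K''.algebraMap_mem _
  set b : L := (c1 : L) / (2 * (c2 : L)) with hb
  have hbK : b ∈ K'' := div_mem (SetLike.coe_mem c1) (mul_mem h2m (SetLike.coe_mem c2))
  set θ : L := z + b with hθd
  have hθK : θ ∉ K'' := by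
    intro h
    apply hzK
    have := sub_mem h hbK
    simpa [hθd] using this
  have hθ2K : θ ^ 2 ∈ K'' := by
    have hval : θ ^ 2 = b ^ 2 - (c0 : L) / (c2 : L) := by
      rw [hθd, hb]
      field_simp
      ring_nf
      linear_combination (4 * (c2 : L)) * hsum
    rw [hval]
    exact sub_mem (pow_mem hbK 2) (div_mem (SetLike.coe_mem c0) (SetLike.coe_mem c2))
  obtain ⟨p, q, hpq⟩ := hdecL _ hθ2K
  have hstab2 : ∀ w : L, σ (σ w) = w → w ∈ fixedField (Subgroup.zpowers (σ * σ)) := by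
    intro w hw g
    have hmem : (σ * σ) ∈ MulAction.stabilizer (L ≃ₐ[F] L) w := by
      rw [MulAction.mem_stabilizer_iff]
      exact hw
    have := Subgroup.zpowers_le.mpr hmem g.2
    exact this
  have hσ2θ : σ (σ θ) = -θ := by
    have hσ2θ2 : (σ (σ θ)) ^ 2 = θ ^ 2 := by
      rw [← map_pow, ← map_pow, hσ2fix _ hθ2K]
    rcases mul_eq_zero.mp
        (show (σ (σ θ) - θ) * (σ (σ θ) + θ) = 0 by linear_combination hσ2θ2) with h | h
    · exfalso
      apply hθK
      have hfixθ := sub_eq_zero.mp h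
      set H := Subgroup.zpowers (σ * σ) with hH
      have hHcard : Fintype.card H = 2 := by
        rw [← Nat.card_eq_fintype_card, Nat.card_zpowers, ← sq, orderOf_pow, hord]
        decide
      have hKle : K'' ≤ fixedField H := fun w hw => hstab2 w (hσ2fix w hw)
      have hffr : Module.finrank (fixedField H) L = 2 := by
        rw [IntermediateField.finrank_fixedField_eq_card, Nat.card_eq_fintype_card, hHcard]
      have hKeq : K'' = fixedField H :=
        IntermediateField.eq_of_le_of_finrank_eq' hKle (by rw [hKL2, hffr])
      rw [hKeq]
      exact hstab2 θ hfixθ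
    · exact eq_neg_of_add_eq_zero_left h
  have hσθ2 : (σ θ) ^ 2 = algebraMap F L p - algebraMap F L q * y := by
    rw [← map_pow, hpq, map_add, map_mul, AlgEquiv.commutes, AlgEquiv.commutes, hσy]
    ring
  set γ : L := σ θ * θ with hγ
  have hσγ : σ γ = -γ := by rw [hγ, map_mul, hσ2θ]; ring
  have hθ0 : θ ≠ 0 := fun h => hθK (h ▸ zero_mem K'')
  have hγ0 : γ ≠ 0 := mul_ne_zero (fun h => hθ0 (by rwa [map_eq_zero_iff σ σ.injective] at h)) hθ0
  obtain ⟨e, he⟩ := hfix (γ / y) (by rw [map_div₀, hσγ, hσy, neg_div_neg_eq])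
  have hγy : γ = algebraMap F L e * y := by
    rw [he]
    field_simp
  have hγsq : algebraMap F L (p ^ 2 - q ^ 2 * a) = algebraMap F L (e ^ 2 * a) := by
    have h1 : γ ^ 2 = (algebraMap F L p) ^ 2 - (algebraMap F L q) ^ 2 * y ^ 2 := by
      rw [hγ, mul_pow, hσθ2, hpq]; ring
    have h2 : γ ^ 2 = (algebraMap F L e) ^ 2 * y ^ 2 := by rw [hγy, mul_pow]
    rw [map_sub, map_mul, map_mul, map_pow, map_pow, map_pow, ← hy2]
    rw [← h1, h2]
  have hkey : p ^ 2 = a * (q ^ 2 + e ^ 2) := by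
    have h := hFLinj hγsq
    linear_combination h
  by_cases hqe : q ^ 2 + e ^ 2 = 0
  · have hp0 : p = 0 := by
      have hp2 : p ^ 2 = 0 := by rw [hkey, hqe, mul_zero]
      exact pow_eq_zero_iff two_ne_zero |>.mp hp2
    have hq0 : q ≠ 0 := by
      intro h
      apply hθ0
      have hθsq : θ ^ 2 = 0 := by rw [hpq, hp0, h]; simp
      exact pow_eq_zero_iff two_ne_zero |>.mp hθsq
    have hi : (e / q) ^ 2 = -1 := by
      field_simp
      linear_combination hqe
    exact sum_sq_of_i h2F _ hi a
  · refine ⟨p * q / (q ^ 2 + e ^ 2), p * e / (q ^ 2 + e ^ 2), ?_⟩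
    field_simp
    linear_combination (-1) * hkey


lemma backward_dir {F K : Type} [Field F] [Field K] [Algebra F K]
    (hchar : ringChar F ≠ 2) (a : F) (ha : ¬ IsSquare a)
    (x : K) (hx : x ^ 2 = algebraMap F K a)
    (hgen : Algebra.adjoin F ({x} : Set K) = ⊤)
    (hdeg : Module.finrank F K = 2)
    (u v : F) (hav : a = u ^ 2 + v ^ 2) :
    ∃ (L : Type) (_ : Field L) (_ : Algebra F L) (_ : Algebra K L) (_ : IsScalarTower F K L),
      IsGalois F L ∧ Module.finrank F L = 4 ∧ IsCyclic (L ≃ₐ[F] L) := by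
  classical
  have h2F : (2 : F) ≠ 0 := Ring.two_ne_zero hchar
  have hFK : Function.Injective (algebraMap F K) := (algebraMap F K).injective
  have ha0 : a ≠ 0 := fun h => ha ⟨0, by simp [h]⟩
  have hu : u ≠ 0 := fun h => ha ⟨v, by rw [hav, h]; ring⟩
  have hv : v ≠ 0 := fun h => ha ⟨u, by rw [hav, h]; ring⟩
  set β : K := algebraMap F K a + algebraMap F K v * x with hβ
  have hβ0 : β ≠ 0 := fun h => ha0 ((quad_indep a ha x hx h).1)
  have hirr : Irreducible ((X : K[X]) ^ 2 - C β) := by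
    refine X_pow_sub_C_irreducible_of_prime Nat.prime_two ?_
    intro t ht
    obtain ⟨p, q, rfl⟩ := quad_decomp x a hx hgen t
    have hexp : algebraMap F K (p ^ 2 + q ^ 2 * a - a) + algebraMap F K (2 * p * q - v) * x = 0 := by
      push_cast [map_add, map_mul, map_sub, map_pow, map_ofNat]
      linear_combination ht - (algebraMap F K q) ^ 2 * hx
    obtain ⟨h1, h2⟩ := quad_indep a ha x hx hexp
    have h1' : p ^ 2 + q ^ 2 * a = a := by linear_combination h1
    have h2' : 2 * p * q = v := by linear_combination h2
    apply ha
    refine ⟨(p ^ 2 - a * q ^ 2) / u, ?_⟩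
    have e1 : (p ^ 2 - a * q ^ 2) ^ 2 = (p ^ 2 + q ^ 2 * a) ^ 2 - a * (2 * p * q) ^ 2 := by ring
    rw [h1', h2'] at e1
    have e2 : a ^ 2 - a * v ^ 2 = a * u ^ 2 := by linear_combination a * hav
    have e3 : (p ^ 2 - a * q ^ 2) ^ 2 = a * u ^ 2 := e1.trans e2
    field_simp
    linear_combination -e3
  haveI hfact : Fact (Irreducible ((X : K[X]) ^ 2 - C β)) := ⟨hirr⟩
  set L : Type := AdjoinRoot ((X : K[X]) ^ 2 - C β) with hL
  set θ : L := AdjoinRoot.root _ with hθd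
  have hθ2 : θ ^ 2 = algebraMap K L β := by
    have h0 := AdjoinRoot.eval₂_root ((X : K[X]) ^ 2 - C β)
    simp only [eval₂_sub, eval₂_pow, eval₂_X, eval₂_C, sub_eq_zero] at h0
    rw [hθd, AdjoinRoot.algebraMap_eq]
    exact h0
  have hKLinj : Function.Injective (algebraMap K L) := (algebraMap K L).injective
  have hFLinj : Function.Injective (algebraMap F L) := (algebraMap F L).injective
  set y : L := algebraMap K L x with hy_def
  set aL : L := algebraMap F L a with haL
  set uL : L := algebraMap F L u with huL
  set vL : L := algebraMap F L v with hvL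
  have hvL0 : vL ≠ 0 := fun h => hv (hFLinj (by rw [map_zero]; exact h))
  have huL0 : uL ≠ 0 := fun h => hu (hFLinj (by rw [map_zero]; exact h))
  have h2L : (2 : L) ≠ 0 := by
    intro h; apply h2F; apply hFLinj; rw [map_ofNat, map_zero]; exact h
  have hy2 : y ^ 2 = aL := by
    rw [hy_def, ← map_pow, hx, haL, IsScalarTower.algebraMap_apply F K L]
  have hθ2' : θ ^ 2 = aL + vL * y := by
    rw [hθ2]
    simp only [hβ, map_add, map_mul, haL, hvL, hy_def, IsScalarTower.algebraMap_apply F K L]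
  have hindepL : ∀ p q : F, algebraMap F L p + algebraMap F L q * y = 0 → p = 0 ∧ q = 0 := by
    intro p q h
    refine quad_indep a ha x hx (p := p) (q := q) (hKLinj ?_)
    rw [map_add, map_mul, map_zero, ← IsScalarTower.algebraMap_apply,
      ← IsScalarTower.algebraMap_apply]
    exact h
  have hy0 : y ≠ 0 := fun h => ha0 (hFLinj (by rw [map_zero, ← haL, ← hy2, h]; ring))
  have hθ0 : θ ≠ 0 := by
    intro h
    apply hβ0
    apply hKLinj
    rw [map_zero, ← hθ2, h]
    ring
  set θ' : L := uL * y / θ with hθ'd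
  have him : vL ^ 2 * aL - aL ^ 2 + aL * uL ^ 2 = 0 := by
    have h0 : v ^ 2 * a - a ^ 2 + a * u ^ 2 = 0 := by rw [hav]; ring
    have := congrArg (algebraMap F L) h0
    push_cast [map_sub, map_add, map_mul, map_pow, map_zero] at this
    rw [haL, huL, hvL]
    linear_combination this
  have hθ'2 : θ' ^ 2 = aL - vL * y := by
    have key : (uL * y) ^ 2 = (aL - vL * y) * θ ^ 2 := by
      rw [hθ2']
      linear_combination (uL ^ 2 + vL ^ 2) * hy2 + him
    rw [hθ'd, div_pow, key]
    exact mul_div_cancel_right₀ _ (pow_ne_zero 2 hθ0)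
  have hθ'0 : θ' ≠ 0 := by
    intro h
    have : aL - vL * y = 0 := by rw [← hθ'2, h]; ring
    have := hindepL a (-v) (by rw [map_neg, ← haL, ← hvL]; linear_combination this)
    exact ha0 this.1
  have hsqne : θ ^ 2 ≠ θ' ^ 2 := by
    intro h
    rw [hθ2', hθ'2] at h
    have h2vy : (2 : L) * (vL * y) = 0 := by linear_combination h
    rcases mul_eq_zero.mp h2vy with h' | h'
    · exact h2L h'
    · rcases mul_eq_zero.mp h' with h'' | h''
      · exact hvL0 h''
      · exact hy0 h''
  -- degrees
  haveI hfdK : FiniteDimensional F K := FiniteDimensional.of_finrank_eq_succ (n := 1) hdeg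
  have hmon : ((X : K[X]) ^ 2 - C β).Monic := monic_X_pow_sub_C β (by norm_num)
  have hKL2 : Module.finrank K L = 2 := by
    have h1 := (AdjoinRoot.powerBasis' hmon).finrank
    have h2 : (AdjoinRoot.powerBasis' hmon).dim = 2 := by
      simp [AdjoinRoot.powerBasis', natDegree_X_pow_sub_C]
    rw [h2] at h1
    exact h1
  haveI hfdKL : FiniteDimensional K L := FiniteDimensional.of_finrank_eq_succ (n := 1) hKL2
  haveI hfdFL : FiniteDimensional F L := FiniteDimensional.trans F K L
  have hL4 : Module.finrank F L = 4 := by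
    rw [← Module.finrank_mul_finrank F K L, hdeg, hKL2]
  -- the quartic polynomial
  set f : F[X] := X ^ 4 - C (2 * a) * X ^ 2 + C (a * u ^ 2) with hf
  have hfdeg : f.natDegree = 4 := by rw [hf]; compute_degree!
  have hfne : f ≠ 0 := fun h => by simp [h] at hfdeg
  have hc1 : θ ^ 2 + θ' ^ 2 = algebraMap F L (2 * a) := by
    rw [hθ2', hθ'2]
    push_cast [map_mul, map_ofNat]
    rw [← haL]
    ring
  have hc2 : θ ^ 2 * θ' ^ 2 = algebraMap F L (a * u ^ 2) := by
    rw [hθ2', hθ'2]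
    push_cast [map_mul, map_pow]
    rw [← haL, ← huL]
    linear_combination (-(vL ^ 2)) * hy2 - him
  have hmap : f.map (algebraMap F L) =
      (X - C θ) * (X - C (-θ)) * (X - C θ') * (X - C (-θ')) := by
    have e : (X - C θ) * (X - C (-θ)) * (X - C θ') * (X - C (-θ')) =
        X ^ 4 - (C θ ^ 2 + C θ' ^ 2) * X ^ 2 + C θ ^ 2 * C θ' ^ 2 := by
      simp only [map_neg]
      ring
    rw [e, hf]
    simp only [Polynomial.map_add, Polynomial.map_sub, Polynomial.map_mul, Polynomial.map_pow,
      Polynomial.map_X, Polynomial.map_C, ← C_pow, ← C_add, ← C_mul, hc1, hc2]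
  have hsplits : Splits (f.map (algebraMap F L)) := by
    rw [hmap]
    exact Splits.mul (Splits.mul (Splits.mul (Splits.X_sub_C _) (Splits.X_sub_C _))
      (Splits.X_sub_C _)) (Splits.X_sub_C _)
  -- separability
  have hne1 : θ ≠ -θ := by
    intro h
    apply hθ0
    have : (2 : L) * θ = 0 := by linear_combination h
    rcases mul_eq_zero.mp this with h' | h'
    exacts [absurd h' h2L, h']
  have hne2 : θ' ≠ -θ' := by
    intro h
    apply hθ'0
    have : (2 : L) * θ' = 0 := by linear_combination h
    rcases mul_eq_zero.mp this with h' | h'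
    exacts [absurd h' h2L, h']
  have hne3 : θ ≠ θ' := fun h => hsqne (by rw [h])
  have hne4 : θ ≠ -θ' := fun h => hsqne (by rw [h]; ring)
  have hne5 : -θ ≠ θ' := fun h => hsqne (by rw [← h]; ring)
  have hne6 : -θ ≠ -θ' := fun h => hne3 (neg_injective h)
  set r : Fin 4 → L := ![θ, -θ, θ', -θ'] with hr
  have hprod4 : f.map (algebraMap F L) = ∏ i, (X - C (r i)) := by
    rw [hmap, Fin.prod_univ_four]
    simp [hr]
  have hrinj : Function.Injective r := by
    intro i j hij
    fin_cases i <;> fin_cases j <;>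
      simp only [hr, Matrix.cons_val_zero, Matrix.cons_val_one, Matrix.head_cons,
        Matrix.cons_val_two, Matrix.tail_cons, Matrix.cons_val_three] at hij <;>
      first
        | rfl
        | exact absurd hij hne1 | exact absurd hij hne2 | exact absurd hij hne3
        | exact absurd hij hne4 | exact absurd hij hne5 | exact absurd hij hne6
        | exact absurd hij.symm hne1 | exact absurd hij.symm hne2
        | exact absurd hij.symm hne3 | exact absurd hij.symm hne4
        | exact absurd hij.symm hne5 | exact absurd hij.symm hne6
        | exact absurd (neg_injective hij) hne3 | exact absurd (neg_injective hij).symm hne3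
  have hsep : f.Separable := by
    rw [← separable_map (algebraMap F L), hprod4]
    exact separable_prod_X_sub_C_iff.mpr hrinj
  -- θ is a root of f
  have hθroot : (aeval θ) f = 0 := by
    rw [hf]
    simp only [map_sub, map_add, map_mul, map_pow, aeval_X, aeval_C]
    rw [show θ ^ 4 = (θ ^ 2) ^ 2 by ring, hθ2']
    push_cast [map_mul, map_ofNat]
    rw [← haL]
    linear_combination vL ^ 2 * hy2 + him
  have hθ'root : (aeval θ') f = 0 := by
    rw [hf]
    simp only [map_sub, map_add, map_mul, map_pow, aeval_X, aeval_C]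
    rw [show θ' ^ 4 = (θ' ^ 2) ^ 2 by ring, hθ'2]
    push_cast [map_mul, map_ofNat]
    rw [← haL]
    linear_combination vL ^ 2 * hy2 + him
  -- adjoin θ over F is everything
  have hyA : y ∈ Algebra.adjoin F ({θ} : Set L) := by
    have hval : y = algebraMap F L v⁻¹ * (θ ^ 2 - algebraMap F L a) := by
      rw [hθ2', map_inv₀, ← haL, ← hvL]
      rw [add_sub_cancel_left, inv_mul_cancel_left₀ hvL0]
    have hθmem : θ ∈ Algebra.adjoin F ({θ} : Set L) :=
      Algebra.subset_adjoin (Set.mem_singleton θ)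
    have hmem : algebraMap F L v⁻¹ * (θ ^ 2 - algebraMap F L a) ∈
        Algebra.adjoin F ({θ} : Set L) := by
      apply mul_mem (Subalgebra.algebraMap_mem _ _)
      exact sub_mem (pow_mem hθmem 2) (Subalgebra.algebraMap_mem _ _)
    rwa [← hval] at hmem
  have hKrange : ∀ t : K, algebraMap K L t ∈ Algebra.adjoin F ({θ} : Set L) := by
    intro t
    obtain ⟨p, q, rfl⟩ := quad_decomp x a hx hgen t
    have hmem2 : algebraMap F L p + algebraMap F L q * y ∈ Algebra.adjoin F ({θ} : Set L) :=
      add_mem (Subalgebra.algebraMap_mem _ _) (mul_mem (Subalgebra.algebraMap_mem _ _) hyA)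
    have heq : algebraMap K L (algebraMap F K p + algebraMap F K q * x)
        = algebraMap F L p + algebraMap F L q * y := by
      rw [map_add, map_mul, ← IsScalarTower.algebraMap_apply, ← IsScalarTower.algebraMap_apply,
        hy_def]
    exact heq ▸ hmem2
  have hadjθ : Algebra.adjoin F ({θ} : Set L) = ⊤ := by
    rw [eq_top_iff]
    intro w _
    let E : Subalgebra K L :=
      { (Algebra.adjoin F ({θ} : Set L)).toSubsemiring with algebraMap_mem' := hKrange }
    have htopE : (⊤ : Subalgebra K L) ≤ E := by
      rw [← AdjoinRoot.adjoinRoot_eq_top (f := (X : K[X]) ^ 2 - C β)]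
      apply Algebra.adjoin_le
      intro s hs
      rcases hs with rfl
      exact Algebra.subset_adjoin rfl
    exact htopE trivial
  haveI hsf : IsSplittingField F L f := by
    refine ⟨hsplits, ?_⟩
    rw [eq_top_iff, ← hadjθ]
    apply Algebra.adjoin_mono
    intro s hs
    rcases hs with rfl
    rw [Polynomial.mem_rootSet]
    exact ⟨hfne, hθroot⟩
  haveI hgalois : IsGalois F L := IsGalois.of_separable_splitting_field hsep
  -- minimal polynomial of θ is f
  have hint : IsIntegral F θ := IsIntegral.of_finite F θ
  have htop : F⟮θ⟯ = (⊤ : IntermediateField F L) := by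
    rw [eq_top_iff]
    intro w _
    exact IntermediateField.algebra_adjoin_le_adjoin F {θ} (hadjθ ▸ Algebra.mem_top)
  have hndmp : (minpoly F θ).natDegree = 4 := by
    have h := IntermediateField.adjoin.finrank hint
    rw [htop, IntermediateField.finrank_top', hL4] at h
    exact h.symm
  have hmm : (minpoly F θ).Monic := minpoly.monic hint
  have hfm : f.Monic := by
    rw [hf]
    monicity!
  have hmp : minpoly F θ = f := by
    obtain ⟨c, hc⟩ := minpoly.dvd F θ hθroot
    have hc0 : c ≠ 0 := by rintro rfl; rw [mul_zero] at hc; exact hfne hc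
    have hcd : c.natDegree = 0 := by
      have hnd := natDegree_mul (minpoly.ne_zero hint) hc0
      rw [← hc, hfdeg, hndmp] at hnd
      omega
    have hclc : c = C (c.coeff 0) := eq_C_of_natDegree_eq_zero hcd
    have hlc : c.coeff 0 = 1 := by
      have h7 := congrArg leadingCoeff hc
      rw [hfm.leadingCoeff, leadingCoeff_mul, hmm.leadingCoeff, one_mul] at h7
      rw [leadingCoeff, hcd] at h7
      exact h7.symm
    rw [hc, hclc, hlc, map_one, mul_one]
  have hθ'rootmp : aeval θ' (minpoly F θ) = 0 := by rw [hmp]; exact hθ'root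
  set e : AdjoinRoot (minpoly F θ) ≃ₐ[F] L :=
    (IntermediateField.adjoinRootEquivAdjoin F hint).trans
      ((IntermediateField.equivOfEq htop).trans IntermediateField.topEquiv) with he
  have heroot : e (AdjoinRoot.root (minpoly F θ)) = θ := by
    rw [he]
    simp [AlgEquiv.trans_apply, IntermediateField.adjoinRootEquivAdjoin_apply_root]
  set σ0 : L →ₐ[F] L := (AdjoinRoot.liftAlgHom (minpoly F θ) (Algebra.ofId F L) θ' hθ'rootmp).comp e.symm.toAlgHom
    with hσ0
  haveI : Algebra.IsAlgebraic F L := Algebra.IsAlgebraic.of_finite F L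
  set σ : L ≃ₐ[F] L := AlgEquiv.ofBijective σ0 (Algebra.IsAlgebraic.algHom_bijective σ0)
    with hσdef
  have hσθ : σ θ = θ' := by
    have h1 : e.symm θ = AdjoinRoot.root (minpoly F θ) :=
      e.symm_apply_eq.mpr heroot.symm
    show σ0 θ = θ'
    rw [hσ0, AlgHom.comp_apply]
    show AdjoinRoot.liftAlgHom (minpoly F θ) (Algebra.ofId F L) θ' hθ'rootmp (e.symm θ) = θ'
    rw [h1]
    exact AdjoinRoot.liftAlgHom_root _ _ _ _
  have hσy : σ y = -y := by
    have h2 : σ (θ ^ 2) = aL + vL * σ y := by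
      rw [hθ2', map_add, map_mul, haL, hvL, AlgEquiv.commutes, AlgEquiv.commutes]
    have h3 : σ (θ ^ 2) = aL - vL * y := by rw [map_pow, hσθ, hθ'2]
    have h5 : vL * σ y = vL * (-y) := by linear_combination h2.symm.trans h3
    exact mul_left_cancel₀ hvL0 h5
  have hprodθ : θ * θ' = uL * y := by
    rw [hθ'd]
    rw [mul_div_assoc', mul_div_cancel_left₀ _ hθ0]
  have hσθ' : σ θ' = -θ := by
    have h6 : σ θ' = uL * (-y) / θ' := by
      rw [hθ'd, map_div₀, map_mul, hσy, hσθ, huL, AlgEquiv.commutes, ← huL]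
    rw [h6, hθ'd]
    rw [div_eq_iff (div_ne_zero (mul_ne_zero huL0 hy0) hθ0), mul_div_assoc', eq_div_iff hθ0]
    ring
  have hext : ∀ τ : L ≃ₐ[F] L, τ θ = θ → τ = 1 := by
    intro τ hτ
    have hle : Algebra.adjoin F ({θ} : Set L) ≤ AlgHom.equalizer (τ : L →ₐ[F] L) (AlgHom.id F L) :=
      Algebra.adjoin_le (by intro s hs; rcases hs with rfl; exact hτ)
    ext w
    have hw := hle (show w ∈ Algebra.adjoin F ({θ} : Set L) by rw [hadjθ]; trivial)
    simpa using hw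
  have hσ2θ : σ (σ θ) = -θ := by rw [hσθ, hσθ']
  have hσ4 : σ ^ 4 = 1 := by
    apply hext
    have h8 : (σ ^ 4) θ = σ (σ (σ (σ θ))) := by
      simp [pow_succ, AlgEquiv.mul_apply]
    rw [h8, hσθ, hσθ', map_neg, hσθ, map_neg, hσθ', neg_neg]
  have hσ2ne : σ ^ 2 ≠ 1 := by
    intro h
    have h1 : (σ ^ 2) θ = θ := by rw [h]; rfl
    have h2 : (σ ^ 2) θ = -θ := by simp only [sq, AlgEquiv.mul_apply]; exact hσ2θ
    have h2' : θ = -θ := h1.symm.trans h2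
    apply hθ0
    have h9 : (2 : L) * θ = 0 := by linear_combination h2'
    rcases mul_eq_zero.mp h9 with h' | h'
    exacts [absurd h' h2L, h']
  haveI hf2 : Fact (Nat.Prime 2) := ⟨Nat.prime_two⟩
  have hord : orderOf σ = 4 := by
    have h10 := orderOf_eq_prime_pow (x := σ) (p := 2) (n := 1)
      (by rw [pow_one]; exact hσ2ne) (by norm_num [hσ4])
    norm_num at h10
    exact h10
  have hcyc : IsCyclic (L ≃ₐ[F] L) := isCyclic_of_orderOf_eq_card σ (by
    rw [hord, IsGalois.card_aut_eq_finrank, hL4])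
  exact ⟨L, inferInstance, inferInstance, inferInstance, inferInstance, hgalois, hL4, hcyc⟩


/-- Let `F` be a field of characteristic different from 2 and let `K = F(√a)` be a quadratic
extension of `F` (so `a` is not a square in `F`). Then `K` can be embedded in a cyclic extension
`L/F` of degree 4 if and only if `a` is a sum of two squares in `F`. -/
theorem embeds_in_cyclic_deg_four_iff_sum_of_two_squares
    {F K : Type} [Field F] [Field K] [Algebra F K]
    (hchar : ringChar F ≠ 2)
    (a : F) (ha : ¬ IsSquare a)
    (x : K) (hx : x ^ 2 = algebraMap F K a)
    (hgen : Algebra.adjoin F ({x} : Set K) = ⊤)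
    (hdeg : Module.finrank F K = 2) :
    (∃ (L : Type) (_ : Field L) (_ : Algebra F L) (_ : Algebra K L) (_ : IsScalarTower F K L),
        IsGalois F L ∧ Module.finrank F L = 4 ∧ IsCyclic (L ≃ₐ[F] L)) ↔
      ∃ u v : F, a = u ^ 2 + v ^ 2 := by
  constructor
  · rintro ⟨L, fL, aFL, aKL, tw, hgal, h4, hcyc⟩
    exact forward_dir hchar a ha x hx hgen hdeg hgal h4 hcyc
  · rintro ⟨u, v, hav⟩
    exact backward_dir hchar a ha x hx hgen hdeg u v hav
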